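/- Let V be a finite set, w : V → ℝ_{≥0}, k ≥ 2 a real number, ε ∈ (0,1], and β = 1 − ε/4. Let {ū_v}_{v∈V} be nonzero vectors in a real inner product space satisfying: ⟨ū_u, ū_v⟩ ≥ 0 for all u, v ∈ V; ∑_{v∈V} w(v)·⟨ū_u, ū_v⟩ = 1 for every u ∈ V; and ∑_{v∈V} w(v)·‖ū_v‖² = k. Let S be a random subset of V and α > 0 be such that: (i) Pr[u ∈ S] = α for every u ∈ V, and (ii) Pr[u ∈ S and v ∈ S] ≤ αε/(12k) for every pair u, v ∈ V with ⟨ū_u, ū_v⟩ < β·max{‖ū_u‖², ‖ū_v‖²}. Then for every u ∈ V, Pr[u ∈ S and ∑_{v∈S} w(v)·‖ū_v‖² ≤ 1 + ε/2] ≥ α/2. -/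

import Mathlib

open Finset
open scoped RealInnerProductSpace

theorem stmt8 {V : Type*} [Fintype V] [DecidableEq V]
    {F : Type*} [NormedAddCommGroup F] [InnerProductSpace ℝ F]
    (w : V → ℝ) (hw : ∀ v, 0 ≤ w v)
    (k ε β α : ℝ) (hk : 2 ≤ k) (hε : ε ∈ Set.Ioc (0 : ℝ) 1) (hβ : β = 1 - ε / 4)
    (ub : V → F) (hub : ∀ v, ub v ≠ 0)
    (hpos : ∀ u v : V, 0 ≤ ⟪ub u, ub v⟫)
    (hsum1 : ∀ u : V, ∑ v, w v * ⟪ub u, ub v⟫ = 1)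
    (hsumk : ∑ v, w v * ‖ub v‖ ^ 2 = k)
    -- the random set `S` is given by a probability distribution `p` on the subsets of `V`
    (p : Finset V → ℝ) (hp0 : ∀ S, 0 ≤ p S) (hp1 : ∑ S, p S = 1)
    (hα : 0 < α)
    -- (i) `Pr[u ∈ S] = α` for every `u`
    (hi : ∀ u : V, ∑ S ∈ Finset.univ.filter (fun S : Finset V => u ∈ S), p S = α)
    -- (ii) `Pr[u ∈ S ∧ v ∈ S] ≤ αε/(12k)` whenever `⟪ū_u, ū_v⟫ < β·max(‖ū_u‖², ‖ū_v‖²)`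
    (hii : ∀ u v : V, ⟪ub u, ub v⟫ < β * max (‖ub u‖ ^ 2) (‖ub v‖ ^ 2) →
      ∑ S ∈ Finset.univ.filter (fun S : Finset V => u ∈ S ∧ v ∈ S), p S ≤ α * ε / (12 * k)) :
    ∀ u : V,
      α / 2 ≤ ∑ S ∈ Finset.univ.filter
          (fun S : Finset V => u ∈ S ∧ ∑ v ∈ S, w v * ‖ub v‖ ^ 2 ≤ 1 + ε / 2), p S := by
  intro u
  obtain ⟨hε0, hε1⟩ := hε
  have hβpos : (0:ℝ) < β := by rw [hβ]; linarith
  have hk0 : (0:ℝ) < k := by linarith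
  set c : V → ℝ := fun v => w v * ‖ub v‖ ^ 2 with hc
  have hc0 : ∀ v, 0 ≤ c v := fun v => mul_nonneg (hw v) (by positivity)
  set C : Finset V := univ.filter
    (fun v => β * max (‖ub u‖ ^ 2) (‖ub v‖ ^ 2) ≤ ⟪ub u, ub v⟫) with hC
  set f : Finset V → ℝ := fun S => ∑ v ∈ S \ C, c v with hf
  have hf0 : ∀ S, 0 ≤ f S := fun S => Finset.sum_nonneg fun v _ => hc0 v
  -- expectation of the "far" part restricted to {u ∈ S}
  have hswap : ∑ S ∈ univ.filter (fun S : Finset V => u ∈ S), p S * f S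
      = ∑ v ∈ univ \ C, c v *
          ∑ S ∈ univ.filter (fun S : Finset V => u ∈ S ∧ v ∈ S), p S := by
    have h1 : ∀ S : Finset V, p S * f S
        = ∑ v ∈ univ \ C, (if v ∈ S then p S * c v else 0) := by
      intro S
      have : f S = ∑ v ∈ univ \ C, (if v ∈ S then c v else 0) := by
        rw [Finset.sum_ite_mem]
        refine Finset.sum_congr ?_ fun _ _ => rfl
        ext v
        simp [Finset.mem_sdiff, Finset.mem_inter, and_comm]
      rw [this, Finset.mul_sum]
      exact Finset.sum_congr rfl fun v _ => by split <;> simp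
    rw [Finset.sum_congr rfl fun S _ => h1 S, Finset.sum_comm]
    refine Finset.sum_congr rfl fun v hv => ?_
    rw [Finset.sum_ite, Finset.sum_const_zero, add_zero, Finset.filter_filter,
      Finset.mul_sum]
    exact Finset.sum_congr rfl fun S _ => mul_comm _ _
  have hA : ∑ S ∈ univ.filter (fun S : Finset V => u ∈ S), p S * f S ≤ α * ε / 12 := by
    rw [hswap]
    have hstep : ∑ v ∈ univ \ C, c v *
          ∑ S ∈ univ.filter (fun S : Finset V => u ∈ S ∧ v ∈ S), p S
        ≤ ∑ v ∈ univ \ C, c v * (α * ε / (12 * k)) := by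
      refine Finset.sum_le_sum fun v hv => ?_
      refine mul_le_mul_of_nonneg_left ?_ (hc0 v)
      apply hii
      have : v ∉ C := (Finset.mem_sdiff.mp hv).2
      simpa [hC, not_le] using this
    refine hstep.trans ?_
    rw [← Finset.sum_mul]
    have hsub : ∑ v ∈ univ \ C, c v ≤ k := by
      rw [← hsumk]
      exact Finset.sum_le_sum_of_subset_of_nonneg (Finset.subset_univ _)
        (fun v _ _ => hc0 v)
    have hpos' : 0 ≤ α * ε / (12 * k) := by positivity
    calc (∑ v ∈ univ \ C, c v) * (α * ε / (12 * k))
        ≤ k * (α * ε / (12 * k)) := mul_le_mul_of_nonneg_right hsub hpos'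
      _ = α * ε / 12 := by field_simp
  -- Markov: the far part exceeds ε/6 with probability ≤ α/2
  have hMarkov : ∑ S ∈ univ.filter (fun S : Finset V => u ∈ S ∧ ε / 6 < f S), p S
      ≤ α / 2 := by
    have key : (ε / 6) * ∑ S ∈ univ.filter (fun S : Finset V => u ∈ S ∧ ε / 6 < f S), p S
        ≤ α * ε / 12 := by
      rw [Finset.mul_sum]
      calc ∑ S ∈ univ.filter (fun S : Finset V => u ∈ S ∧ ε / 6 < f S), ε / 6 * p S
          ≤ ∑ S ∈ univ.filter (fun S : Finset V => u ∈ S ∧ ε / 6 < f S), p S * f S := by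
            refine Finset.sum_le_sum fun S hS => ?_
            rw [mul_comm]
            exact mul_le_mul_of_nonneg_left
              (le_of_lt (Finset.mem_filter.mp hS).2.2) (hp0 S)
        _ ≤ ∑ S ∈ univ.filter (fun S : Finset V => u ∈ S), p S * f S := by
            refine Finset.sum_le_sum_of_subset_of_nonneg ?_ fun S _ _ =>
              mul_nonneg (hp0 S) (hf0 S)
            intro S hS
            simp only [Finset.mem_filter] at hS ⊢
            exact ⟨hS.1, hS.2.1⟩
        _ ≤ α * ε / 12 := hA
    nlinarith [key]
  -- the close part is deterministically small
  have hclose : ∀ S : Finset V, ∑ v ∈ S ∩ C, c v ≤ 1 / β := by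
    intro S
    have h1 : ∑ v ∈ S ∩ C, c v ≤ ∑ v ∈ C, c v :=
      Finset.sum_le_sum_of_subset_of_nonneg Finset.inter_subset_right
        (fun v _ _ => hc0 v)
    have h2 : ∑ v ∈ C, c v ≤ ∑ v ∈ C, w v * ⟪ub u, ub v⟫ / β := by
      refine Finset.sum_le_sum fun v hv => ?_
      have hvc : β * max (‖ub u‖ ^ 2) (‖ub v‖ ^ 2) ≤ ⟪ub u, ub v⟫ := by
        simpa [hC] using hv
      have hmax : ‖ub v‖ ^ 2 ≤ max (‖ub u‖ ^ 2) (‖ub v‖ ^ 2) := le_max_right _ _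
      have : β * ‖ub v‖ ^ 2 ≤ ⟪ub u, ub v⟫ :=
        le_trans (mul_le_mul_of_nonneg_left hmax hβpos.le) hvc
      have hnv : ‖ub v‖ ^ 2 ≤ ⟪ub u, ub v⟫ / β :=
        (le_div_iff₀' hβpos).mpr this
      calc c v = w v * ‖ub v‖ ^ 2 := rfl
        _ ≤ w v * (⟪ub u, ub v⟫ / β) := mul_le_mul_of_nonneg_left hnv (hw v)
        _ = w v * ⟪ub u, ub v⟫ / β := by ring
    have h3 : ∑ v ∈ C, w v * ⟪ub u, ub v⟫ / β
        ≤ ∑ v ∈ (univ : Finset V), w v * ⟪ub u, ub v⟫ / β := by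
      refine Finset.sum_le_sum_of_subset_of_nonneg (Finset.subset_univ _)
        (fun v _ _ => ?_)
      exact div_nonneg (mul_nonneg (hw v) (hpos u v)) hβpos.le
    have h4 : ∑ v ∈ (univ : Finset V), w v * ⟪ub u, ub v⟫ / β = 1 / β := by
      rw [← Finset.sum_div, hsum1 u]
    linarith
  -- the good event contains {u ∈ S ∧ f S ≤ ε/6}
  have hgood : ∀ S : Finset V, u ∈ S → f S ≤ ε / 6 →
      ∑ v ∈ S, w v * ‖ub v‖ ^ 2 ≤ 1 + ε / 2 := by
    intro S _ hfS
    have hsplit : ∑ v ∈ S, c v = ∑ v ∈ S ∩ C, c v + ∑ v ∈ S \ C, c v :=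
      (Finset.sum_inter_add_sum_sdiff S C c).symm
    have h1β : 1 / β ≤ 1 + ε / 3 := by
      rw [div_le_iff₀ hβpos, hβ]
      nlinarith
    calc ∑ v ∈ S, w v * ‖ub v‖ ^ 2 = ∑ v ∈ S, c v := rfl
      _ = ∑ v ∈ S ∩ C, c v + f S := hsplit
      _ ≤ 1 / β + ε / 6 := add_le_add (hclose S) hfS
      _ ≤ 1 + ε / 2 := by linarith
  -- put everything together
  have hpart : ∑ S ∈ univ.filter (fun S : Finset V => u ∈ S ∧ f S ≤ ε / 6), p S
      + ∑ S ∈ univ.filter (fun S : Finset V => u ∈ S ∧ ε / 6 < f S), p S = α := by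
    rw [← hi u]
    rw [← Finset.sum_filter_add_sum_filter_not
      (univ.filter (fun S : Finset V => u ∈ S)) (fun S => f S ≤ ε / 6)]
    congr 1
    · rw [Finset.filter_filter]
    · rw [Finset.filter_filter]
      congr 1
      ext S
      simp [not_le]
  have hfinal : ∑ S ∈ univ.filter (fun S : Finset V => u ∈ S ∧ f S ≤ ε / 6), p S
      ≤ ∑ S ∈ Finset.univ.filter
          (fun S : Finset V => u ∈ S ∧ ∑ v ∈ S, w v * ‖ub v‖ ^ 2 ≤ 1 + ε / 2), p S := by
    refine Finset.sum_le_sum_of_subset_of_nonneg ?_ fun S _ _ => hp0 S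
    intro S hS
    simp only [Finset.mem_filter] at hS ⊢
    exact ⟨hS.1, hS.2.1, hgood S hS.2.1 hS.2.2⟩
  linarith
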